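/- arXiv:2208.14939 — 4 statements merged into one kernel-verified Lean document; each statement's English description precedes it below -/
import Mathlib

section
/- With T independent uniformly random subsets of sizes m₁,…,m_T from an n-element set (n ≥ 2, mᵢ ≥ 1), the variance of x_T = |⋂ M_i| equals (∏ mᵢ / n^{T-1}) · (1 + ∏(mᵢ−1)/(n−1)^{T-1} − ∏ mᵢ / n^{T-1}). -/
open Finset

lemma countA (n k : ℕ) :
    (univ.filter fun S : Finset (Fin n) => S.card = k).card = n.choose k := by
  rw [← Finset.powerset_univ, ← Finset.powersetCard_eq_filter,
    Finset.card_powersetCard, Finset.card_univ, Fintype.card_fin]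

lemma countB {n : ℕ} (k : ℕ) (hk : 1 ≤ k) (a : Fin n) :
    (univ.filter fun S : Finset (Fin n) => S.card = k ∧ a ∈ S).card
      = (n - 1).choose (k - 1) := by
  have h : (univ.filter fun S : Finset (Fin n) => S.card = k ∧ a ∈ S).card
      = (Finset.powersetCard (k - 1) (univ.erase a)).card := by
    refine Finset.card_bij' (fun S _ => S.erase a) (fun S _ => insert a S) ?hi ?hj ?li ?ri
    case hi =>
      intro S hS
      simp only [mem_filter, mem_univ, true_and] at hS
      rw [Finset.mem_powersetCard]
      refine ⟨fun x hx => ?_, by rw [Finset.card_erase_of_mem hS.2, hS.1]⟩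
      exact Finset.mem_erase.mpr ⟨(Finset.mem_erase.mp hx).1, mem_univ x⟩
    case hj =>
      intro S hS
      rw [Finset.mem_powersetCard] at hS
      have ha : a ∉ S := fun h => (Finset.mem_erase.mp (hS.1 h)).1 rfl
      simp only [mem_filter, mem_univ, true_and]
      refine ⟨?_, Finset.mem_insert_self a S⟩
      rw [Finset.card_insert_of_notMem ha, hS.2, Nat.sub_add_cancel hk]
    case li =>
      intro S hS
      simp only [mem_filter, mem_univ, true_and] at hS
      exact Finset.insert_erase hS.2
    case ri =>
      intro S hS
      rw [Finset.mem_powersetCard] at hS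
      have ha : a ∉ S := fun h => (Finset.mem_erase.mp (hS.1 h)).1 rfl
      exact Finset.erase_insert ha
  rw [h, Finset.card_powersetCard, Finset.card_erase_of_mem (mem_univ a),
    Finset.card_univ, Fintype.card_fin]

lemma countC1 {n : ℕ} {a b : Fin n} (hab : a ≠ b) :
    (univ.filter fun S : Finset (Fin n) => S.card = 1 ∧ a ∈ S ∧ b ∈ S).card = 0 := by
  rw [Finset.card_eq_zero, Finset.filter_eq_empty_iff]
  rintro S - ⟨h1, ha, hb⟩
  obtain ⟨x, rfl⟩ := Finset.card_eq_one.mp h1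
  rw [Finset.mem_singleton] at ha hb
  exact hab (ha.trans hb.symm)

lemma countC {n : ℕ} (k : ℕ) (hk : 2 ≤ k) {a b : Fin n} (hab : a ≠ b) :
    (univ.filter fun S : Finset (Fin n) => S.card = k ∧ a ∈ S ∧ b ∈ S).card
      = (n - 2).choose (k - 2) := by
  have h : (univ.filter fun S : Finset (Fin n) => S.card = k ∧ a ∈ S ∧ b ∈ S).card
      = (Finset.powersetCard (k - 2) ((univ.erase a).erase b)).card := by
    refine Finset.card_bij' (fun S _ => (S.erase a).erase b)
      (fun S _ => insert a (insert b S)) ?hi ?hj ?li ?ri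
    case hi =>
      intro S hS
      simp only [mem_filter, mem_univ, true_and] at hS
      obtain ⟨h1, ha, hb⟩ := hS
      rw [Finset.mem_powersetCard]
      constructor
      · intro x hx
        simp only [Finset.mem_erase] at hx ⊢
        exact ⟨hx.1, hx.2.1, mem_univ x⟩
      · rw [Finset.card_erase_of_mem (Finset.mem_erase.mpr ⟨hab.symm, hb⟩),
          Finset.card_erase_of_mem ha, h1]
        omega
    case hj =>
      intro S hS
      rw [Finset.mem_powersetCard] at hS
      have hbS : b ∉ S := fun h => (Finset.mem_erase.mp (hS.1 h)).1 rfl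
      have haS : a ∉ S := fun h => (Finset.mem_erase.mp (Finset.mem_erase.mp (hS.1 h)).2).1 rfl
      have haS' : a ∉ insert b S := by
        simp only [Finset.mem_insert]
        rintro (rfl | h)
        · exact hab rfl
        · exact haS h
      simp only [mem_filter, mem_univ, true_and]
      refine ⟨?_, Finset.mem_insert_self a _, Finset.mem_insert_of_mem (Finset.mem_insert_self b S)⟩
      rw [Finset.card_insert_of_notMem haS', Finset.card_insert_of_notMem hbS, hS.2]
      omega
    case li =>
      intro S hS
      simp only [mem_filter, mem_univ, true_and] at hS
      obtain ⟨h1, ha, hb⟩ := hS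
      ext x
      simp only [Finset.mem_insert, Finset.mem_erase]
      constructor
      · rintro (rfl | rfl | ⟨-, -, h⟩) <;> assumption
      · intro hx
        by_cases h1a : x = a
        · exact Or.inl h1a
        · by_cases h2b : x = b
          · exact Or.inr (Or.inl h2b)
          · exact Or.inr (Or.inr ⟨h2b, h1a, hx⟩)
    case ri =>
      intro S hS
      rw [Finset.mem_powersetCard] at hS
      have hbS : b ∉ S := fun h => (Finset.mem_erase.mp (hS.1 h)).1 rfl
      have haS : a ∉ S := fun h => (Finset.mem_erase.mp (Finset.mem_erase.mp (hS.1 h)).2).1 rfl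
      have haS' : a ∉ insert b S := by
        simp only [Finset.mem_insert]
        rintro (rfl | h)
        · exact hab rfl
        · exact haS h
      show ((insert a (insert b S)).erase a).erase b = S
      rw [Finset.erase_insert haS', Finset.erase_insert hbS]
  rw [h, Finset.card_powersetCard, Finset.card_erase_of_mem
    (Finset.mem_erase.mpr ⟨hab.symm, mem_univ b⟩), Finset.card_erase_of_mem (mem_univ a),
    Finset.card_univ, Fintype.card_fin]
  congr 1

lemma nat1 {n k : ℕ} (h1 : 1 ≤ k) (hk : k ≤ n) :
    n * (n - 1).choose (k - 1) = n.choose k * k := by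
  have := Nat.add_one_mul_choose_eq (n - 1) (k - 1)
  simp only [Nat.succ_eq_add_one, Nat.sub_add_cancel (h1.trans hk), Nat.sub_add_cancel h1] at this
  exact this

lemma nat2 {n k : ℕ} (h2 : 2 ≤ k) (hk : k ≤ n) :
    n * ((n - 1) * ((n - 2).choose (k - 2))) = n.choose k * k * (k - 1) := by
  have A := nat1 (show 1 ≤ k - 1 by omega) (show k - 1 ≤ n - 1 by omega)
  have B := nat1 (show 1 ≤ k by omega) hk
  have e1 : n - 1 - 1 = n - 2 := by omega
  have e2 : k - 1 - 1 = k - 2 := by omega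
  rw [e1, e2] at A
  rw [A, ← mul_assoc, B]

lemma qB {n k : ℕ} (h1 : 1 ≤ k) (hk : k ≤ n) (hn : 2 ≤ n) :
    (((n - 1).choose (k - 1) : ℕ) : ℚ) = (n.choose k : ℚ) * k / n := by
  have hn0 : (n : ℚ) ≠ 0 := Nat.cast_ne_zero.mpr (by omega)
  rw [eq_div_iff hn0]
  exact_mod_cast (mul_comm ((n - 1).choose (k - 1)) n).trans (nat1 h1 hk)

lemma qC {n : ℕ} (hn : 2 ≤ n) (k : ℕ) (h1 : 1 ≤ k) (hk : k ≤ n) {a b : Fin n} (hab : a ≠ b) :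
    ((univ.filter fun S : Finset (Fin n) => S.card = k ∧ a ∈ S ∧ b ∈ S).card : ℚ)
      = (n.choose k : ℚ) * k * ((k : ℚ) - 1) / ((n : ℚ) * ((n : ℚ) - 1)) := by
  have hn0 : (n : ℚ) ≠ 0 := Nat.cast_ne_zero.mpr (by omega)
  have hn2 : (2 : ℚ) ≤ (n : ℚ) := by exact_mod_cast hn
  have hn1 : (n : ℚ) - 1 ≠ 0 := by intro h; linarith
  rw [eq_div_iff (mul_ne_zero hn0 hn1)]
  rcases eq_or_lt_of_le h1 with h | h2
  · rw [← h, countC1 hab]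
    norm_num
  · have h2' : 2 ≤ k := h2
    rw [countC k h2' hab]
    have hk1 : ((k : ℚ) - 1) = ((k - 1 : ℕ) : ℚ) := by rw [Nat.cast_sub h1]; push_cast; ring
    rw [hk1, show ((n : ℚ) - 1) = ((n - 1 : ℕ) : ℚ) by rw [Nat.cast_sub (by omega : 1 ≤ n)]; push_cast; ring]
    have key : (n - 2).choose (k - 2) * (n * (n - 1)) = n.choose k * k * (k - 1) := by
      rw [← nat2 h2' hk]; ring
    exact_mod_cast key

/-- Variance of the number of fully overlapped elements:
`Var(x_T) = (∏ mᵢ / n^{T-1}) · (1 + ∏(mᵢ−1)/(n−1)^{T-1} − ∏ mᵢ / n^{T-1})`,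
where `Var(x_T) = E(x_T²) − E(x_T)²`. -/
theorem ghgd_variance_full_overlap (n T : ℕ) (hn : 2 ≤ n) (hT : 1 ≤ T)
    (m : Fin T → ℕ) (hm₁ : ∀ i, 1 ≤ m i) (hm : ∀ i, m i ≤ n) :
    (∑ f : {f : Fin T → Finset (Fin n) // ∀ i, (f i).card = m i},
        (((Finset.univ.inf fun i => f.1 i).card : ℚ)) ^ 2) /
      (Fintype.card {f : Fin T → Finset (Fin n) // ∀ i, (f i).card = m i}) -
    ((∑ f : {f : Fin T → Finset (Fin n) // ∀ i, (f i).card = m i},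
        ((Finset.univ.inf fun i => f.1 i).card : ℚ)) /
      (Fintype.card {f : Fin T → Finset (Fin n) // ∀ i, (f i).card = m i})) ^ 2
      = (∏ i, (m i : ℚ)) / (n : ℚ) ^ (T - 1) *
          (1 + (∏ i, ((m i : ℚ) - 1)) / ((n : ℚ) - 1) ^ (T - 1)
             - (∏ i, (m i : ℚ)) / (n : ℚ) ^ (T - 1)) := by
  classical
  have hn0 : (n : ℚ) ≠ 0 := Nat.cast_ne_zero.mpr (by omega)
  have hn2 : (2 : ℚ) ≤ (n : ℚ) := by exact_mod_cast hn
  have hn1 : (n : ℚ) - 1 ≠ 0 := by intro h; linarith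
  have hTne : Nonempty (Fin T) := ⟨⟨0, hT⟩⟩
  -- membership in the big intersection
  have hmem : ∀ (f : Fin T → Finset (Fin n)) (a : Fin n),
      a ∈ univ.inf f ↔ ∀ i, a ∈ f i := by
    intro f a
    rw [← Finset.inf'_eq_inf (univ_nonempty) f, Finset.mem_inf']
    simp
  -- the card of the intersection as a sum of indicator products
  have hx : ∀ f : Fin T → Finset (Fin n), ((univ.inf f).card : ℚ)
      = ∑ a : Fin n, ∏ i, (if a ∈ f i then (1 : ℚ) else 0) := by
    intro f
    have h1 : ∀ a : Fin n, (∏ i, if a ∈ f i then (1 : ℚ) else 0)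
        = if a ∈ univ.inf f then (1 : ℚ) else 0 := by
      intro a
      rw [Fintype.prod_boole]
      simp [hmem]
    rw [Finset.sum_congr rfl fun a _ => h1 a, Finset.sum_boole]
    congr 1
    simp
  -- factorization over the product space
  have factor2 : ∀ a b : Fin n,
      (∑ f : Fin T → Finset (Fin n),
          ∏ i, (if (f i).card = m i ∧ a ∈ f i ∧ b ∈ f i then (1 : ℚ) else 0))
        = ∏ i, ((univ.filter fun S : Finset (Fin n) =>
            S.card = m i ∧ a ∈ S ∧ b ∈ S).card : ℚ) := by
    intro a b
    rw [← Fintype.piFinset_univ, Finset.sum_prod_piFinset (univ : Finset (Finset (Fin n)))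
      (fun i S => if S.card = m i ∧ a ∈ S ∧ b ∈ S then (1 : ℚ) else 0)]
    exact Finset.prod_congr rfl fun i _ => by rw [Finset.sum_boole]
  have factor1 : ∀ a : Fin n,
      (∑ f : Fin T → Finset (Fin n),
          ∏ i, (if (f i).card = m i ∧ a ∈ f i then (1 : ℚ) else 0))
        = ∏ i, ((univ.filter fun S : Finset (Fin n) =>
            S.card = m i ∧ a ∈ S).card : ℚ) := by
    intro a
    rw [← Fintype.piFinset_univ, Finset.sum_prod_piFinset (univ : Finset (Finset (Fin n)))
      (fun i S => if S.card = m i ∧ a ∈ S then (1 : ℚ) else 0)]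
    exact Finset.prod_congr rfl fun i _ => by rw [Finset.sum_boole]
  -- combining indicators
  have comb2 : ∀ (f : Fin T → Finset (Fin n)) (a b : Fin n),
      ((if (∀ i, (f i).card = m i) then (1 : ℚ) else 0) *
        ((∏ i, if a ∈ f i then (1 : ℚ) else 0) * (∏ i, if b ∈ f i then (1 : ℚ) else 0)))
        = ∏ i, (if (f i).card = m i ∧ a ∈ f i ∧ b ∈ f i then (1 : ℚ) else 0) := by
    intro f a b
    by_cases hp : ∀ i, (f i).card = m i
    · rw [if_pos hp, one_mul, ← Finset.prod_mul_distrib]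
      refine Finset.prod_congr rfl fun i _ => ?_
      by_cases h2 : a ∈ f i <;> by_cases h3 : b ∈ f i <;> simp [hp i, h2, h3]
    · rw [if_neg hp, zero_mul]
      obtain ⟨i0, hi0⟩ := not_forall.mp hp
      exact (Finset.prod_eq_zero (Finset.mem_univ i0) (by simp [hi0])).symm
  have comb1 : ∀ (f : Fin T → Finset (Fin n)) (a : Fin n),
      ((if (∀ i, (f i).card = m i) then (1 : ℚ) else 0) *
        (∏ i, if a ∈ f i then (1 : ℚ) else 0))
        = ∏ i, (if (f i).card = m i ∧ a ∈ f i then (1 : ℚ) else 0) := by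
    intro f a
    by_cases hp : ∀ i, (f i).card = m i
    · rw [if_pos hp, one_mul]
      refine Finset.prod_congr rfl fun i _ => ?_
      by_cases h2 : a ∈ f i <;> simp [hp i, h2]
    · rw [if_neg hp, zero_mul]
      obtain ⟨i0, hi0⟩ := not_forall.mp hp
      exact (Finset.prod_eq_zero (Finset.mem_univ i0) (by simp [hi0])).symm
  -- abbreviations
  set C1 : ℚ := ∏ i, (((n - 1).choose (m i - 1) : ℕ) : ℚ) with hC1def
  set C2 : ℚ := ∏ i, ((n.choose (m i) : ℚ) * (m i) * ((m i : ℚ) - 1)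
      / ((n : ℚ) * ((n : ℚ) - 1))) with hC2def
  set D : ℚ := ∏ i, (n.choose (m i) : ℚ) with hDdef
  -- subtype sums to filtered sums
  have hsub : ∀ g : (Fin T → Finset (Fin n)) → ℚ,
      (∑ f : {f : Fin T → Finset (Fin n) // ∀ i, (f i).card = m i}, g f.1)
        = ∑ f : Fin T → Finset (Fin n),
            (if (∀ i, (f i).card = m i) then (1 : ℚ) else 0) * g f := by
    intro g
    rw [← Finset.sum_subtype (univ.filter fun f : Fin T → Finset (Fin n) =>
        ∀ i, (f i).card = m i) (fun f => by simp) g]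
    rw [Finset.sum_filter]
    exact Finset.sum_congr rfl fun f _ => by split <;> simp
  -- first moment
  have M1 : (∑ f : {f : Fin T → Finset (Fin n) // ∀ i, (f i).card = m i},
      ((Finset.univ.inf fun i => f.1 i).card : ℚ)) = n * C1 := by
    rw [hsub fun f => ((univ.inf f).card : ℚ)]
    calc ∑ f : Fin T → Finset (Fin n),
          (if (∀ i, (f i).card = m i) then (1 : ℚ) else 0) * ((univ.inf f).card : ℚ)
        = ∑ f : Fin T → Finset (Fin n), ∑ a : Fin n,
            ∏ i, (if (f i).card = m i ∧ a ∈ f i then (1 : ℚ) else 0) := by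
          refine Finset.sum_congr rfl fun f _ => ?_
          rw [hx f, Finset.mul_sum]
          exact Finset.sum_congr rfl fun a _ => comb1 f a
      _ = ∑ a : Fin n, ∑ f : Fin T → Finset (Fin n),
            ∏ i, (if (f i).card = m i ∧ a ∈ f i then (1 : ℚ) else 0) := Finset.sum_comm
      _ = ∑ a : Fin n, C1 := by
          refine Finset.sum_congr rfl fun a _ => ?_
          rw [factor1 a]
          exact Finset.prod_congr rfl fun i _ => by rw [countB (m i) (hm₁ i) a]
      _ = n * C1 := by
          rw [Finset.sum_const, Finset.card_univ, Fintype.card_fin, nsmul_eq_mul]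
  -- second moment
  have M2 : (∑ f : {f : Fin T → Finset (Fin n) // ∀ i, (f i).card = m i},
      (((Finset.univ.inf fun i => f.1 i).card : ℚ)) ^ 2)
      = n * C1 + n * ((n : ℚ) - 1) * C2 := by
    rw [hsub fun f => ((univ.inf f).card : ℚ) ^ 2]
    calc ∑ f : Fin T → Finset (Fin n),
          (if (∀ i, (f i).card = m i) then (1 : ℚ) else 0) * ((univ.inf f).card : ℚ) ^ 2
        = ∑ f : Fin T → Finset (Fin n), ∑ a : Fin n, ∑ b : Fin n,
            ∏ i, (if (f i).card = m i ∧ a ∈ f i ∧ b ∈ f i then (1 : ℚ) else 0) := by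
          refine Finset.sum_congr rfl fun f _ => ?_
          rw [hx f, sq, Finset.sum_mul_sum, Finset.mul_sum]
          refine Finset.sum_congr rfl fun a _ => ?_
          rw [Finset.mul_sum]
          exact Finset.sum_congr rfl fun b _ => comb2 f a b
      _ = ∑ a : Fin n, ∑ b : Fin n, ∑ f : Fin T → Finset (Fin n),
            ∏ i, (if (f i).card = m i ∧ a ∈ f i ∧ b ∈ f i then (1 : ℚ) else 0) := by
          rw [Finset.sum_comm]
          exact Finset.sum_congr rfl fun a _ => Finset.sum_comm
      _ = ∑ a : Fin n, ∑ b : Fin n,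
            ∏ i, ((univ.filter fun S : Finset (Fin n) =>
              S.card = m i ∧ a ∈ S ∧ b ∈ S).card : ℚ) := by
          exact Finset.sum_congr rfl fun a _ => Finset.sum_congr rfl fun b _ => factor2 a b
      _ = ∑ a : Fin n, (C1 + ((n : ℚ) - 1) * C2) := by
          refine Finset.sum_congr rfl fun a _ => ?_
          rw [← Finset.add_sum_erase _ _ (Finset.mem_univ a)]
          congr 1
          · refine Finset.prod_congr rfl fun i _ => ?_
            congr 1
            rw [Finset.filter_congr (fun S _ => by tauto :
              ∀ S ∈ (univ : Finset (Finset (Fin n))),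
                (S.card = m i ∧ a ∈ S ∧ a ∈ S) ↔ (S.card = m i ∧ a ∈ S))]
            rw [countB (m i) (hm₁ i) a]
          · rw [Finset.sum_congr rfl fun b hb =>
              Finset.prod_congr rfl fun i _ =>
                qC hn (m i) (hm₁ i) (hm i) (Ne.symm (Finset.mem_erase.mp hb).1)]
            rw [Finset.sum_const, Finset.card_erase_of_mem (Finset.mem_univ a),
              Finset.card_univ, Fintype.card_fin, nsmul_eq_mul, Nat.cast_sub (by omega : 1 ≤ n)]
            rw [← hC2def]
            push_cast
            ring
      _ = n * C1 + n * ((n : ℚ) - 1) * C2 := by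
          rw [Finset.sum_const, Finset.card_univ, Fintype.card_fin, nsmul_eq_mul]
          ring
  -- denominator
  have hD : ((Fintype.card {f : Fin T → Finset (Fin n) // ∀ i, (f i).card = m i} : ℕ) : ℚ)
      = D := by
    rw [Fintype.card_subtype]
    have heq : (univ.filter fun f : Fin T → Finset (Fin n) => ∀ i, (f i).card = m i)
        = Fintype.piFinset (fun i => univ.filter fun S : Finset (Fin n) => S.card = m i) := by
      ext f
      simp [Fintype.mem_piFinset]
    rw [heq, Fintype.card_piFinset]
    push_cast
    exact Finset.prod_congr rfl fun i _ => by rw [countA]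
  have hD0 : D ≠ 0 := by
    rw [hDdef]
    exact Finset.prod_ne_zero_iff.mpr fun i _ =>
      Nat.cast_ne_zero.mpr (Nat.choose_pos (hm i)).ne'
  -- relate C1, C2 to D
  have hC1 : C1 = D * ∏ i, ((m i : ℚ) / n) := by
    rw [hC1def, hDdef, ← Finset.prod_mul_distrib]
    refine Finset.prod_congr rfl fun i _ => ?_
    rw [qB (hm₁ i) (hm i) hn]
    ring
  have hC2 : C2 = D * ∏ i, ((m i : ℚ) * ((m i : ℚ) - 1) / ((n : ℚ) * ((n : ℚ) - 1))) := by
    rw [hC2def, hDdef, ← Finset.prod_mul_distrib]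
    exact Finset.prod_congr rfl fun i _ => by ring
  -- products of constants
  have hu : (∏ i, ((m i : ℚ) / n)) = (∏ i, (m i : ℚ)) / (n : ℚ) ^ T := by
    rw [Finset.prod_div_distrib, Finset.prod_const, Finset.card_univ, Fintype.card_fin]
  have hv : (∏ i, ((m i : ℚ) * ((m i : ℚ) - 1) / ((n : ℚ) * ((n : ℚ) - 1))))
      = ((∏ i, (m i : ℚ)) * ∏ i, ((m i : ℚ) - 1)) / ((n : ℚ) ^ T * ((n : ℚ) - 1) ^ T) := by
    rw [Finset.prod_div_distrib, Finset.prod_mul_distrib, Finset.prod_mul_distrib,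
      Finset.prod_const, Finset.prod_const, Finset.card_univ, Fintype.card_fin]
  have hpow : (n : ℚ) ^ T = (n : ℚ) ^ (T - 1) * n := by
    conv_lhs => rw [show T = (T - 1) + 1 by omega]
    rw [pow_succ]
  have hpow1 : ((n : ℚ) - 1) ^ T = ((n : ℚ) - 1) ^ (T - 1) * ((n : ℚ) - 1) := by
    conv_lhs => rw [show T = (T - 1) + 1 by omega]
    rw [pow_succ]
  rw [M1, M2, hD, hC1, hC2, hu, hv, hpow, hpow1]
  have hp1 : (n : ℚ) ^ (T - 1) ≠ 0 := pow_ne_zero _ hn0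
  have hp2 : ((n : ℚ) - 1) ^ (T - 1) ≠ 0 := pow_ne_zero _ hn1
  field_simp
end

section
/- The counts of subset tuples by intersection size satisfy C(x_T = k | n, M) = (n/k) · C(x_T = k−1 | n−1, M−1) for 1 ≤ k ≤ min_i mᵢ, where M−1 denotes (m₁−1, …, m_T−1). -/
open Finset

lemma mem_univ_inf {n T : ℕ} (f : Fin T → Finset (Fin n)) (a : Fin n) :
    a ∈ Finset.univ.inf f ↔ ∀ i, a ∈ f i := by
  rw [← Finset.singleton_subset_iff, ← Finset.le_iff_subset, Finset.le_inf_iff]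
  simp [Finset.singleton_subset_iff]

variable {n : ℕ}

noncomputable def ghgdDown (x : Fin (n+1)) (s : Finset (Fin (n+1))) : Finset (Fin n) :=
  s.preimage x.succAbove (Fin.succAbove_right_injective.injOn)

lemma mem_ghgdDown {x : Fin (n+1)} {s : Finset (Fin (n+1))} {a : Fin n} :
    a ∈ ghgdDown x s ↔ x.succAbove a ∈ s := Finset.mem_preimage

noncomputable def ghgdUp (x : Fin (n+1)) (t : Finset (Fin n)) : Finset (Fin (n+1)) :=
  insert x (t.map x.succAboveEmb)

lemma map_ghgdDown (x : Fin (n+1)) (s : Finset (Fin (n+1))) :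
    (ghgdDown x s).map x.succAboveEmb = s.erase x := by
  ext y
  simp only [Finset.mem_map, mem_ghgdDown, Finset.mem_erase, Fin.succAboveEmb,
    Function.Embedding.coeFn_mk]
  constructor
  · rintro ⟨z, hz, rfl⟩; exact ⟨Fin.succAbove_ne _ _, hz⟩
  · rintro ⟨hy, hys⟩
    obtain ⟨z, rfl⟩ := Fin.exists_succAbove_eq hy
    exact ⟨z, hys, rfl⟩

lemma card_ghgdDown (x : Fin (n+1)) (s : Finset (Fin (n+1))) :
    (ghgdDown x s).card = (s.erase x).card := by
  rw [← map_ghgdDown x s, Finset.card_map]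

lemma ghgdDown_ghgdUp (x : Fin (n+1)) (t : Finset (Fin n)) :
    ghgdDown x (ghgdUp x t) = t := by
  ext z
  simp [mem_ghgdDown, ghgdUp, Fin.succAbove_ne, Fin.succAbove_right_inj,
    Fin.succAboveEmb]

lemma ghgdUp_ghgdDown {x : Fin (n+1)} {s : Finset (Fin (n+1))} (hx : x ∈ s) :
    ghgdUp x (ghgdDown x s) = s := by
  rw [ghgdUp, map_ghgdDown, Finset.insert_erase hx]

lemma card_ghgdUp (x : Fin (n+1)) (t : Finset (Fin n)) :
    (ghgdUp x t).card = t.card + 1 := by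
  have hx : x ∉ t.map x.succAboveEmb := by
    simp only [Finset.mem_map, Fin.succAboveEmb, Function.Embedding.coeFn_mk, not_exists]
    rintro y ⟨-, h⟩
    exact Fin.succAbove_ne x y h
  rw [ghgdUp, Finset.card_insert_of_notMem hx, Finset.card_map]

lemma inf_ghgdDown {T : ℕ} (x : Fin (n+1)) (f : Fin T → Finset (Fin (n+1))) :
    Finset.univ.inf (fun i => ghgdDown x (f i)) = ghgdDown x (Finset.univ.inf f) := by
  ext a
  simp [mem_univ_inf, mem_ghgdDown]

lemma inf_ghgdUp {T : ℕ} (x : Fin (n+1)) (g : Fin T → Finset (Fin n)) :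
    Finset.univ.inf (fun i => ghgdUp x (g i)) = ghgdUp x (Finset.univ.inf g) := by
  ext a
  by_cases ha : a = x
  · subst ha; simp [mem_univ_inf, ghgdUp]
  · obtain ⟨z, rfl⟩ := Fin.exists_succAbove_eq ha
    simp [mem_univ_inf, ghgdUp, Fin.succAbove_ne, Fin.succAbove_right_inj,
      Fin.succAboveEmb]

lemma nat_card_sigma {ι : Type*} [Fintype ι] (f : ι → Type*) [∀ i, Fintype (f i)] :
    Nat.card (Σ i, f i) = ∑ i, Nat.card (f i) := by
  simp [Nat.card_eq_fintype_card, Fintype.card_sigma]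

lemma nat_card_mem {α : Type*} [DecidableEq α] (s : Finset α) :
    Nat.card {x // x ∈ s} = s.card := by
  simp [Nat.card_eq_fintype_card]

/-- `ghgdCount n m k` is the number of `T`-tuples `(M₁, …, M_T)` of subsets of an
`n`-element set with `|Mᵢ| = mᵢ` and `|⋂ᵢ Mᵢ| = k`. -/
def ghgdCount (n : ℕ) {T : ℕ} (m : Fin T → ℕ) (k : ℕ) : ℕ :=
  Fintype.card {f : Fin T → Finset (Fin n) //
    (∀ i, (f i).card = m i) ∧ (Finset.univ.inf fun i => f i).card = k}

/-- `C(x_T = k | n, M) = (n/k) · C(x_T = k−1 | n−1, M−1)` for `1 ≤ k ≤ minᵢ mᵢ`,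
stated equivalently as `k · C(x_T = k | n, M) = n · C(x_T = k−1 | n−1, M−1)`. -/
theorem ghgdCount_shift (n T k : ℕ) (hn : 1 ≤ n) (hT : 1 ≤ T)
    (m : Fin T → ℕ) (hk : 1 ≤ k) (hkm : ∀ i, k ≤ m i) (hm : ∀ i, m i ≤ n) :
    k * ghgdCount n m k = n * ghgdCount (n - 1) (fun i => m i - 1) (k - 1) := by
  obtain ⟨n, rfl⟩ : ∃ n', n = n' + 1 := ⟨n - 1, (Nat.succ_pred_eq_of_pos hn).symm⟩
  obtain ⟨k, rfl⟩ : ∃ k', k = k' + 1 := ⟨k - 1, (Nat.succ_pred_eq_of_pos hk).symm⟩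
  simp only [Nat.add_sub_cancel]
  set S := {f : Fin T → Finset (Fin (n+1)) //
    (∀ i, (f i).card = m i) ∧ (Finset.univ.inf fun i => f i).card = k + 1} with hS
  set S' := {g : Fin T → Finset (Fin n) //
    (∀ i, (g i).card = m i - 1) ∧ (Finset.univ.inf fun i => g i).card = k} with hS'
  have e : (Σ f : S, {x : Fin (n+1) // x ∈ Finset.univ.inf f.1}) ≃ Fin (n+1) × S' := by
    refine
      { toFun := fun p => ⟨p.2.1, ⟨fun i => ghgdDown p.2.1 (p.1.1 i), ?_, ?_⟩⟩
        invFun := fun q => ⟨⟨fun i => ghgdUp q.1 (q.2.1 i), ?_, ?_⟩, ⟨q.1, ?_⟩⟩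
        left_inv := ?_
        right_inv := ?_ }
    · intro i
      have hx : p.2.1 ∈ p.1.1 i := by
        have := p.2.2; rw [mem_univ_inf] at this; exact this i
      rw [card_ghgdDown, Finset.card_erase_of_mem hx, p.1.2.1 i]
    · rw [inf_ghgdDown, card_ghgdDown, Finset.card_erase_of_mem p.2.2, p.1.2.2]
      omega
    · intro i
      rw [card_ghgdUp, q.2.2.1 i]
      have := hkm i; omega
    · rw [inf_ghgdUp, card_ghgdUp, q.2.2.2]
    · rw [mem_univ_inf]
      intro i
      exact Finset.mem_insert_self _ _
    · rintro ⟨⟨f, hf1, hf2⟩, ⟨x, hx⟩⟩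
      have hxmem : ∀ i, x ∈ f i := (mem_univ_inf _ _).mp hx
      have hfeq : (fun i => ghgdUp x (ghgdDown x (f i))) = f :=
        funext fun i => ghgdUp_ghgdDown (hxmem i)
      refine Sigma.ext (Subtype.ext hfeq) ?_
      rw [Subtype.heq_iff_coe_eq]
      intro y
      simp [hfeq]
    · rintro ⟨x, ⟨g, hg1, hg2⟩⟩
      refine Prod.ext rfl (Subtype.ext (funext fun i => ghgdDown_ghgdUp x (g i)))
  have h1 : (k + 1) * ghgdCount (n+1) m (k+1) =
      Nat.card (Σ f : S, {x : Fin (n+1) // x ∈ Finset.univ.inf f.1}) := by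
    rw [nat_card_sigma]
    have hfib : ∀ f : S, Nat.card {x : Fin (n+1) // x ∈ Finset.univ.inf f.1} = k + 1 :=
      fun f => (nat_card_mem _).trans f.2.2
    simp only [hfib, Finset.sum_const, smul_eq_mul, Finset.card_univ]
    rw [mul_comm, ghgdCount, ← Nat.card_eq_fintype_card]
  have h2 : (n + 1) * ghgdCount n (fun i => m i - 1) k = Nat.card (Fin (n+1) × S') := by
    rw [Nat.card_prod, Nat.card_eq_fintype_card (α := Fin (n+1)), Fintype.card_fin,
      ghgdCount, ← Nat.card_eq_fintype_card]
  rw [h1, h2]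
  exact Nat.card_congr e
end

section
/- For the number x_T of fully overlapped elements among T independent uniform random subsets of sizes m₁,…,m_T of an n-set, the moments satisfy the recursion E(x_T^v | n, M) = E(x_T | n, M) · ∑_{i=0}^{v-1} C(v−1, i) · E(x_T^i | n−1, M−1) for v ≥ 1, where M−1 = (m₁−1,…,m_T−1) and E(x_T^0) = 1. -/
/-- `ghgdMoment n m v` is the `v`-th moment `E(x_T^v)` of the number of fully
overlapped elements among `T` independent uniformly random subsets of sizes
`m i` of an `n`-element set. -/
noncomputable def ghgdMoment (n : ℕ) {T : ℕ} (m : Fin T → ℕ) (v : ℕ) : ℚ :=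
  (∑ f : {f : Fin T → Finset (Fin n) // ∀ i, (f i).card = m i},
      ((Finset.univ.inf fun i => f.1 i).card : ℚ) ^ v) /
    (Fintype.card {f : Fin T → Finset (Fin n) // ∀ i, (f i).card = m i})

open Finset

variable {T : ℕ}

lemma card_insert_map {k : ℕ} (a : Fin (k+1)) (s : Finset (Fin k)) :
    (insert a (s.map a.succAboveEmb)).card = s.card + 1 := by
  rw [Finset.card_insert_of_notMem, Finset.card_map]
  simp only [Finset.mem_map, Fin.succAboveEmb_apply]
  rintro ⟨c, -, hc⟩
  exact Fin.succAbove_ne a c hc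

lemma inf_insert_map {k : ℕ} (a : Fin (k+1)) (f : Fin T → Finset (Fin k)) :
    (Finset.univ.inf fun i => insert a ((f i).map a.succAboveEmb))
      = insert a ((Finset.univ.inf f).map a.succAboveEmb) := by
  ext b
  simp only [Finset.mem_inf, Finset.mem_insert, Finset.mem_map,
    Fin.succAboveEmb_apply, Finset.mem_univ, true_implies]
  by_cases hb : b = a
  · simp [hb]
  · obtain ⟨c, rfl⟩ := Fin.exists_succAbove_eq hb
    constructor
    · intro h
      refine Or.inr ⟨c, fun i => ?_, rfl⟩
      rcases h i with h' | ⟨d, hd, hdc⟩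
      · exact absurd h' hb
      · rwa [← Fin.succAbove_right_inj.mp hdc]
    · rintro (h | ⟨d, hd, hdc⟩) i
      · exact absurd h hb
      · obtain rfl := Fin.succAbove_right_inj.mp hdc
        exact Or.inr ⟨d, hd i, rfl⟩

lemma map_preimage_erase {k : ℕ} (a : Fin (k+1)) (s : Finset (Fin (k+1))) :
    ((s.erase a).preimage a.succAbove
        (Fin.succAbove_right_injective.injOn)).map a.succAboveEmb = s.erase a := by
  ext b
  simp only [Finset.mem_map, Fin.succAboveEmb_apply, Finset.mem_preimage]
  constructor
  · rintro ⟨c, hc, rfl⟩; exact hc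
  · intro hb
    obtain ⟨c, rfl⟩ := Fin.exists_succAbove_eq (Finset.ne_of_mem_erase hb)
    exact ⟨c, hb, rfl⟩

lemma key_bij {k : ℕ} (a : Fin (k+1)) (m : Fin T → ℕ) (hm₁ : ∀ i, 1 ≤ m i) (g : ℕ → ℚ) :
    (∑ f : {f : Fin T → Finset (Fin (k+1)) // ∀ i, (f i).card = m i},
        (if a ∈ Finset.univ.inf f.1 then g (Finset.univ.inf f.1).card else 0))
    = ∑ f : {f : Fin T → Finset (Fin k) // ∀ i, (f i).card = m i - 1},
        g ((Finset.univ.inf f.1).card + 1) := by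
  classical
  rw [← Finset.sum_filter]
  refine Finset.sum_bij'
    (i := fun f hf => (⟨fun j => ((f.1 j).erase a).preimage a.succAbove
      (Fin.succAbove_right_injective.injOn), ?_⟩ :
      {f : Fin T → Finset (Fin k) // ∀ i, (f i).card = m i - 1}))
    (j := fun f' _ => ⟨fun j => insert a ((f'.1 j).map a.succAboveEmb), ?_⟩)
    ?_ ?_ ?_ ?_ ?_
  · -- card of preimage
    intro j
    have hmem : a ∈ f.1 j := by
      simp only [Finset.mem_filter, Finset.mem_inf] at hf
      exact hf.2 j (Finset.mem_univ j)
    have := congrArg Finset.card (map_preimage_erase a (f.1 j))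
    rw [Finset.card_map] at this
    rw [this, Finset.card_erase_of_mem hmem, f.2 j]
  · -- card of forward
    intro j
    rw [card_insert_map, f'.2 j, Nat.sub_add_cancel (hm₁ j)]
  · intro f hf; exact Finset.mem_univ _
  · -- membership in filter
    intro f' _
    simp only [Finset.mem_filter, Finset.mem_univ, true_and, Finset.mem_inf]
    intro i _; exact Finset.mem_insert_self a _
  · -- left inverse
    intro f hf
    ext j b
    simp only [Finset.mem_filter, Finset.mem_inf] at hf
    have hmem : a ∈ f.1 j := hf.2 j (Finset.mem_univ j)
    show b ∈ insert a ((((f.1 j).erase a).preimage a.succAbove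
      (Fin.succAbove_right_injective.injOn)).map a.succAboveEmb) ↔ b ∈ f.1 j
    rw [map_preimage_erase, Finset.insert_erase hmem]
  · -- right inverse
    intro f' _
    ext j b
    have : (insert a ((f'.1 j).map a.succAboveEmb)).erase a = (f'.1 j).map a.succAboveEmb := by
      rw [Finset.erase_insert]
      simp only [Finset.mem_map, Fin.succAboveEmb_apply]
      rintro ⟨c, -, hc⟩
      exact Fin.succAbove_ne a c hc
    simp [this, Finset.preimage_map, Fin.succAbove_right_inj]
  · -- values
    intro f hf
    simp only [Finset.mem_filter, Finset.mem_univ, true_and, Finset.mem_inf] at hf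
    have hmem : ∀ j, a ∈ f.1 j := fun j => hf j trivial
    congr 1
    have h2 : (fun j => insert a ((((f.1 j).erase a).preimage a.succAbove
        (Fin.succAbove_right_injective.injOn)).map a.succAboveEmb)) = f.1 := by
      funext j; rw [map_preimage_erase, Finset.insert_erase (hmem j)]
    conv_lhs => rw [show Finset.univ.inf f.1
      = insert a ((Finset.univ.inf fun j => ((f.1 j).erase a).preimage a.succAbove
          (Fin.succAbove_right_injective.injOn)).map a.succAboveEmb) from
        (congrArg _ h2.symm).trans (inf_insert_map a _)]
    rw [card_insert_map]

noncomputable def modelSum (n : ℕ) {T : ℕ} (m : Fin T → ℕ) (v : ℕ) : ℚ :=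
  ∑ f : {f : Fin T → Finset (Fin n) // ∀ i, (f i).card = m i},
    ((Finset.univ.inf f.1).card : ℚ) ^ v

lemma modelSum_zero (n : ℕ) (m : Fin T → ℕ) :
    modelSum n m 0
      = (Fintype.card {f : Fin T → Finset (Fin n) // ∀ i, (f i).card = m i} : ℚ) := by
  simp [modelSum]

lemma model_nonempty (n : ℕ) (m : Fin T → ℕ) (hm : ∀ i, m i ≤ n) :
    Nonempty {f : Fin T → Finset (Fin n) // ∀ i, (f i).card = m i} := by
  choose t ht hc using fun i =>
    Finset.exists_subset_card_eq (s := (Finset.univ : Finset (Fin n))) (n := m i)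
      (by simpa using hm i)
  exact ⟨⟨t, hc⟩⟩

lemma modelSum_step (k : ℕ) (m : Fin T → ℕ) (hm₁ : ∀ i, 1 ≤ m i) (v : ℕ) (hv : 1 ≤ v) :
    modelSum (k+1) m v
      = (k+1) * ∑ i ∈ Finset.range v,
          (Nat.choose (v-1) i : ℚ) * modelSum k (fun j => m j - 1) i := by
  classical
  obtain ⟨w, rfl⟩ : ∃ w, v = w + 1 := ⟨v - 1, (Nat.succ_pred_eq_of_pos hv).symm⟩
  have hx : ∀ s : Finset (Fin (k+1)), ((s.card : ℚ)) = ∑ a : Fin (k+1), if a ∈ s then (1:ℚ) else 0 := by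
    intro s
    rw [Finset.sum_boole]
    congr 1
    rw [Finset.filter_mem_eq_inter, Finset.univ_inter]
  calc modelSum (k+1) m (w+1)
      = ∑ f : {f : Fin T → Finset (Fin (k+1)) // ∀ i, (f i).card = m i},
          ∑ a : Fin (k+1), (if a ∈ Finset.univ.inf f.1
            then ((Finset.univ.inf f.1).card : ℚ) ^ w else 0) := by
        refine Finset.sum_congr rfl fun f _ => ?_
        rw [pow_succ, hx, Finset.mul_sum]
        exact Finset.sum_congr rfl fun a _ => by rw [mul_ite, mul_one, mul_zero]
    _ = ∑ a : Fin (k+1), ∑ f : {f : Fin T → Finset (Fin (k+1)) // ∀ i, (f i).card = m i},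
          (if a ∈ Finset.univ.inf f.1
            then ((Finset.univ.inf f.1).card : ℚ) ^ w else 0) := Finset.sum_comm
    _ = ∑ a : Fin (k+1), ∑ f' : {f : Fin T → Finset (Fin k) // ∀ i, (f i).card = m i - 1},
          (((Finset.univ.inf f'.1).card + 1 : ℕ) : ℚ) ^ w := by
        refine Finset.sum_congr rfl fun a _ => ?_
        exact key_bij a m hm₁ (fun t => (t : ℚ) ^ w)
    _ = (k+1) * ∑ f' : {f : Fin T → Finset (Fin k) // ∀ i, (f i).card = m i - 1},
          (((Finset.univ.inf f'.1).card : ℚ) + 1) ^ w := by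
        rw [Finset.sum_const, Finset.card_univ, Fintype.card_fin, nsmul_eq_mul]
        exact congrArg₂ (· * ·) (by push_cast; ring)
          (Finset.sum_congr rfl fun f _ => by push_cast; ring)
    _ = (k+1) * ∑ i ∈ Finset.range (w+1),
          (Nat.choose w i : ℚ) * modelSum k (fun j => m j - 1) i := by
        congr 1
        simp only [add_pow, one_pow, mul_one, modelSum]
        rw [Finset.sum_comm]
        refine Finset.sum_congr rfl fun i _ => ?_
        rw [Finset.mul_sum]
        exact Finset.sum_congr rfl fun f _ => by ring

lemma ghgdMoment_eq (n : ℕ) (m : Fin T → ℕ) (v : ℕ) :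
    ghgdMoment n m v = modelSum n m v /
      (Fintype.card {f : Fin T → Finset (Fin n) // ∀ i, (f i).card = m i}) := rfl

/-- Moment recursion:
`E(x_T^v | n, M) = E(x_T | n, M) · ∑_{i=0}^{v-1} C(v−1, i) · E(x_T^i | n−1, M−1)`. -/
theorem ghgdMoment_recursion (n T v : ℕ) (hn : 1 ≤ n) (hT : 1 ≤ T) (hv : 1 ≤ v)
    (m : Fin T → ℕ) (hm₁ : ∀ i, 1 ≤ m i) (hm : ∀ i, m i ≤ n) :
    ghgdMoment n m v
      = ghgdMoment n m 1 *
        ∑ i ∈ Finset.range v,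
          (Nat.choose (v - 1) i : ℚ) * ghgdMoment (n - 1) (fun j => m j - 1) i := by
  classical
  obtain ⟨k, rfl⟩ : ∃ k, n = k + 1 := ⟨n - 1, (Nat.succ_pred_eq_of_pos hn).symm⟩
  have hk : k + 1 - 1 = k := rfl
  set N : ℚ := (Fintype.card {f : Fin T → Finset (Fin (k+1)) // ∀ i, (f i).card = m i} : ℚ)
    with hN
  set N' : ℚ := (Fintype.card {f : Fin T → Finset (Fin k) // ∀ i, (f i).card = m i - 1} : ℚ)
    with hN'
  have hNpos : 0 < N := by
    haveI := model_nonempty (k+1) m hm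
    rw [hN]
    exact_mod_cast Fintype.card_pos
      (α := {f : Fin T → Finset (Fin (k+1)) // ∀ i, (f i).card = m i})
  have hN'pos : 0 < N' := by
    haveI := model_nonempty k (fun j => m j - 1) (fun i => show m i - 1 ≤ k by
      have := hm i; omega)
    rw [hN']
    exact_mod_cast Fintype.card_pos
      (α := {f : Fin T → Finset (Fin k) // ∀ i, (f i).card = m i - 1})
  have hstep := modelSum_step k m hm₁ v hv
  have hstep1 := modelSum_step k m hm₁ 1 le_rfl
  have h1 : modelSum (k+1) m 1 = (k+1) * N' := by
    rw [hstep1]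
    simp [modelSum_zero, hN']
  rw [ghgdMoment_eq, ghgdMoment_eq, hk, hstep, h1]
  have hc : ∀ i ∈ Finset.range v, (Nat.choose (v-1) i : ℚ) * ghgdMoment k (fun j => m j - 1) i
      = (Nat.choose (v-1) i : ℚ) * modelSum k (fun j => m j - 1) i / N' := by
    intro i _; rw [ghgdMoment_eq, mul_div_assoc]
  rw [Finset.sum_congr rfl hc, ← Finset.sum_div, ← hN]
  field_simp
end

section
/- For T independent uniform random subsets of equal size m in an n-set, E(x_T³) = (m^T/n^{T-1}) · (1 + ((m−1)^T/(n−1)^{T-1}) · (3 + (m−2)^T/(n−2)^{T-1})). -/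
open Finset

lemma count_containing {n : ℕ} (m : ℕ) (S : Finset (Fin n)) :
    (((univ : Finset (Fin n)).powersetCard m).filter (fun s => S ⊆ s)).card
      = if S.card ≤ m then Nat.choose (n - S.card) (m - S.card) else 0 := by
  split_ifs with h
  · have hcard : ((univ : Finset (Fin n)) \ S).card = n - S.card := by
      rw [card_sdiff_of_subset (subset_univ S), card_univ, Fintype.card_fin]
    rw [← hcard, ← Finset.card_powersetCard (m - S.card) ((univ : Finset (Fin n)) \ S)]
    apply Finset.card_bij' (fun s _ => s \ S) (fun t _ => t ∪ S)
    · intro s hs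
      simp only [mem_filter, Finset.mem_powersetCard_univ] at hs
      rw [Finset.mem_powersetCard]
      exact ⟨sdiff_subset_sdiff (subset_univ s) le_rfl,
        by rw [card_sdiff_of_subset hs.2, hs.1]⟩
    · intro t ht
      rw [Finset.mem_powersetCard] at ht
      have hdisj : Disjoint t S := Finset.disjoint_of_subset_left ht.1 sdiff_disjoint
      simp only [mem_filter, Finset.mem_powersetCard_univ]
      constructor
      · rw [card_union_of_disjoint hdisj, ht.2, Nat.sub_add_cancel h]
      · exact subset_union_right
    · intro a ha
      simp only [mem_filter, Finset.mem_powersetCard_univ] at ha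
      exact sdiff_union_of_subset ha.2
    · intro a ha
      rw [Finset.mem_powersetCard] at ha
      have hdisj : Disjoint a S := Finset.disjoint_of_subset_left ha.1 sdiff_disjoint
      exact union_sdiff_cancel_right hdisj
  · rw [Finset.card_eq_zero, Finset.filter_eq_empty_iff]
    intro s hs
    rw [Finset.mem_powersetCard_univ] at hs
    intro hSs
    exact h (hs ▸ card_le_card hSs)

lemma sum_subtype_prod_pow {n : ℕ} (T m : ℕ) (g : Finset (Fin n) → ℚ) :
    (∑ f : {f : Fin T → Finset (Fin n) // ∀ i, (f i).card = m}, ∏ i, g (f.1 i))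
      = (∑ s ∈ (univ : Finset (Fin n)).powersetCard m, g s) ^ T := by
  have h1 : (∑ s ∈ (univ : Finset (Fin n)).powersetCard m, g s) ^ T
      = ∏ _i : Fin T, ∑ s ∈ (univ : Finset (Fin n)).powersetCard m, g s := by
    rw [Finset.prod_const, card_univ, Fintype.card_fin]
  rw [h1, Finset.prod_univ_sum]
  exact (Finset.sum_subtype (Fintype.piFinset fun _i => powersetCard m univ)
    (fun x => by simp [Fintype.mem_piFinset, Finset.mem_powersetCard_univ])
    (fun x => ∏ i, g (x i))).symm

lemma triple_sum {n : ℕ} (hn : 3 ≤ n) (c : ℕ → ℚ) :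
    (∑ x : Fin n, ∑ y : Fin n, ∑ z : Fin n, c ({x, y, z} : Finset (Fin n)).card)
      = n * c 1 + 3 * ((n:ℚ) * ((n:ℚ) - 1)) * c 2
        + (n:ℚ) * ((n:ℚ) - 1) * ((n:ℚ) - 2) * c 3 := by
  have hn1 : (1:ℕ) ≤ n := by omega
  have hn2 : (2:ℕ) ≤ n := by omega
  have key : ∀ x : Fin n, (∑ y : Fin n, ∑ z : Fin n, c ({x, y, z} : Finset (Fin n)).card)
      = c 1 + 3 * ((n:ℚ) - 1) * c 2 + ((n:ℚ) - 1) * ((n:ℚ) - 2) * c 3 := by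
    intro x
    rw [← Finset.sum_sdiff (Finset.singleton_subset_iff.mpr (mem_univ x))]
    have hx_term : (∑ y ∈ ({x} : Finset (Fin n)), ∑ z : Fin n, c ({x, y, z} : Finset (Fin n)).card)
        = c 1 + ((n:ℚ) - 1) * c 2 := by
      rw [Finset.sum_singleton]
      have : ∀ z : Fin n, ({x, x, z} : Finset (Fin n)) = {x, z} := by
        intro z; simp [Finset.insert_idem]
      simp only [this]
      rw [← Finset.sum_sdiff (Finset.singleton_subset_iff.mpr (mem_univ x)),
        Finset.sum_singleton]
      have h1 : ({x, x} : Finset (Fin n)).card = 1 := by simp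
      rw [h1]
      have h2 : ∀ z ∈ (univ : Finset (Fin n)) \ {x}, c ({x, z} : Finset (Fin n)).card = c 2 := by
        intro z hz
        simp only [Finset.mem_sdiff, Finset.mem_singleton] at hz
        rw [Finset.card_pair (Ne.symm hz.2)]
      rw [Finset.sum_congr rfl h2, Finset.sum_const, Finset.card_sdiff_of_subset (by simp),
        Finset.card_univ, Fintype.card_fin, Finset.card_singleton]
      rw [nsmul_eq_mul, Nat.cast_sub hn1]
      push_cast
      ring
    have hne_term : ∀ y ∈ (univ : Finset (Fin n)) \ {x},
        (∑ z : Fin n, c ({x, y, z} : Finset (Fin n)).card)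
          = 2 * c 2 + ((n:ℚ) - 2) * c 3 := by
      intro y hy
      simp only [Finset.mem_sdiff, Finset.mem_singleton] at hy
      have hxy : x ≠ y := fun h => hy.2 h.symm
      have hsub : ({x, y} : Finset (Fin n)) ⊆ univ := subset_univ _
      rw [← Finset.sum_sdiff hsub]
      have hA : ∀ z ∈ (univ : Finset (Fin n)) \ {x, y},
          c ({x, y, z} : Finset (Fin n)).card = c 3 := by
        intro z hz
        simp only [Finset.mem_sdiff, Finset.mem_insert, Finset.mem_singleton, not_or] at hz
        have : ({x, y, z} : Finset (Fin n)).card = 3 := by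
          rw [Finset.card_insert_of_notMem (by simp [hxy, Ne.symm hz.2.1]),
            Finset.card_pair (Ne.symm hz.2.2)]
        rw [this]
      have hB : (∑ z ∈ ({x, y} : Finset (Fin n)), c ({x, y, z} : Finset (Fin n)).card)
          = 2 * c 2 := by
        rw [Finset.sum_pair hxy]
        have e1 : ({x, y, x} : Finset (Fin n)) = {x, y} := by
          ext a; simp; tauto
        have e2 : ({x, y, y} : Finset (Fin n)) = {x, y} := by
          ext a; simp
        rw [e1, e2, Finset.card_pair hxy]
        ring
      rw [Finset.sum_congr rfl hA, hB, Finset.sum_const, Finset.card_sdiff_of_subset (by simp [hsub]),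
        Finset.card_univ, Fintype.card_fin, Finset.card_pair hxy]
      rw [nsmul_eq_mul, Nat.cast_sub hn2]
      push_cast
      ring
    rw [Finset.sum_congr rfl hne_term, hx_term, Finset.sum_const,
      Finset.card_sdiff_of_subset (by simp), Finset.card_univ, Fintype.card_fin, Finset.card_singleton]
    rw [nsmul_eq_mul, Nat.cast_sub hn1]
    push_cast
    ring
  rw [Finset.sum_congr rfl (fun x _ => key x), Finset.sum_const, Finset.card_univ,
    Fintype.card_fin]
  ring

/-- Third moment of the number of fully overlapped elements for equal subset
sizes: `E(x_T³) = (m^T/n^{T-1}) · (1 + ((m−1)^T/(n−1)^{T-1}) · (3 + (m−2)^T/(n−2)^{T-1}))`. -/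
theorem ghgd_third_moment (n T m : ℕ) (hn : 3 ≤ n) (hT : 1 ≤ T)
    (hm₂ : 2 ≤ m) (hm : m ≤ n) :
    (∑ f : {f : Fin T → Finset (Fin n) // ∀ i, (f i).card = m},
        ((Finset.univ.inf fun i => f.1 i).card : ℚ) ^ 3) /
      (Fintype.card {f : Fin T → Finset (Fin n) // ∀ i, (f i).card = m})
      = (m : ℚ) ^ T / (n : ℚ) ^ (T - 1) *
          (1 + ((m : ℚ) - 1) ^ T / ((n : ℚ) - 1) ^ (T - 1) *
            (3 + ((m : ℚ) - 2) ^ T / ((n : ℚ) - 2) ^ (T - 1))) := by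
  -- denominator
  have hcard : (Fintype.card {f : Fin T → Finset (Fin n) // ∀ i, (f i).card = m} : ℚ)
      = ((Nat.choose n m : ℚ)) ^ T := by
    have h := sum_subtype_prod_pow (n := n) T m (fun _ => (1:ℚ))
    simp only [Finset.prod_const_one, Finset.sum_const, nsmul_eq_mul, mul_one,
      Finset.card_univ, Finset.card_powersetCard, Fintype.card_fin] at h
    exact_mod_cast h
  -- cube expansion
  have cube : ∀ t : Finset (Fin n), ((t.card : ℚ)) ^ 3
      = ∑ x : Fin n, ∑ y : Fin n, ∑ z : Fin n,
          (if ({x, y, z} : Finset (Fin n)) ⊆ t then (1:ℚ) else 0) := by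
    intro t
    have hb : ((t.card : ℚ)) = ∑ x : Fin n, if x ∈ t then (1:ℚ) else 0 := by
      simp [Finset.sum_boole]
    rw [hb, show (3:ℕ) = 1 + 1 + 1 from rfl, pow_add, pow_add, pow_one]
    rw [Finset.sum_mul_sum, Finset.sum_mul]
    refine Finset.sum_congr rfl fun x _ => ?_
    rw [Finset.sum_mul]
    refine Finset.sum_congr rfl fun y _ => ?_
    rw [Finset.mul_sum]
    refine Finset.sum_congr rfl fun z _ => ?_
    by_cases hx : x ∈ t <;> by_cases hy : y ∈ t <;> by_cases hz : z ∈ t <;>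
      simp [hx, hy, hz, Finset.insert_subset_iff]
  -- the count function
  set c : ℕ → ℚ := fun k =>
    ((if k ≤ m then Nat.choose (n - k) (m - k) else 0 : ℕ) : ℚ) ^ T with hc
  -- main sum computation
  have main : (∑ f : {f : Fin T → Finset (Fin n) // ∀ i, (f i).card = m},
        ((Finset.univ.inf fun i => f.1 i).card : ℚ) ^ 3)
      = ∑ x : Fin n, ∑ y : Fin n, ∑ z : Fin n, c ({x, y, z} : Finset (Fin n)).card := by
    have step1 : (∑ f : {f : Fin T → Finset (Fin n) // ∀ i, (f i).card = m},
          ((Finset.univ.inf fun i => f.1 i).card : ℚ) ^ 3)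
        = ∑ x : Fin n, ∑ y : Fin n, ∑ z : Fin n,
            ∑ f : {f : Fin T → Finset (Fin n) // ∀ i, (f i).card = m},
              (if ({x, y, z} : Finset (Fin n)) ⊆ Finset.univ.inf (fun i => f.1 i)
                then (1:ℚ) else 0) := by
      rw [Finset.sum_congr rfl fun f _ => cube _]
      rw [Finset.sum_comm]
      refine Finset.sum_congr rfl fun x _ => ?_
      rw [Finset.sum_comm]
      refine Finset.sum_congr rfl fun y _ => ?_
      rw [Finset.sum_comm]
    rw [step1]
    refine Finset.sum_congr rfl fun x _ => Finset.sum_congr rfl fun y _ =>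
      Finset.sum_congr rfl fun z _ => ?_
    set S : Finset (Fin n) := {x, y, z} with hS
    have step2 : ∀ f : {f : Fin T → Finset (Fin n) // ∀ i, (f i).card = m},
        (if S ⊆ Finset.univ.inf (fun i => f.1 i) then (1:ℚ) else 0)
          = ∏ i, (if S ⊆ f.1 i then (1:ℚ) else 0) := by
      intro f
      rw [Finset.prod_boole]
      by_cases h : ∀ i ∈ (univ : Finset (Fin T)), S ⊆ f.1 i
      · rw [if_pos h, if_pos (show S ⊆ Finset.univ.inf (fun i => f.1 i) from
          Finset.le_inf h)]
      · rw [if_neg h, if_neg (show ¬ S ⊆ Finset.univ.inf (fun i => f.1 i) from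
          fun hsub => h fun i hi => le_trans hsub (Finset.inf_le hi))]
    have key : (∑ f : {f : Fin T → Finset (Fin n) // ∀ i, (f i).card = m},
          ∏ i, (if S ⊆ f.1 i then (1:ℚ) else 0))
        = (∑ s ∈ (univ : Finset (Fin n)).powersetCard m,
            (if S ⊆ s then (1:ℚ) else 0)) ^ T :=
      sum_subtype_prod_pow T m (fun s => if S ⊆ s then (1:ℚ) else 0)
    rw [Finset.sum_congr rfl fun f _ => step2 f, key, Finset.sum_boole,
      count_containing m S]
  -- nonzeroness
  have hn3 : (3:ℚ) ≤ (n:ℚ) := by exact_mod_cast hn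
  have hn0 : (n:ℚ) ≠ 0 := by linarith
  have hn1 : (n:ℚ) - 1 ≠ 0 := by linarith
  have hn2 : (n:ℚ) - 2 ≠ 0 := by linarith
  have hc0 : ((Nat.choose n m : ℚ)) ≠ 0 := by
    exact_mod_cast (Nat.choose_pos hm).ne'
  -- ratio identities
  have hnat1 : n * Nat.choose (n-1) (m-1) = Nat.choose n m * m := by
    have h := Nat.add_one_mul_choose_eq (n-1) (m-1)
    rw [show n - 1 + 1 = n by omega, show m - 1 + 1 = m by omega] at h
    exact h
  have hnat2 : (n-1) * Nat.choose (n-2) (m-2) = Nat.choose (n-1) (m-1) * (m-1) := by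
    have h := Nat.add_one_mul_choose_eq (n-2) (m-2)
    rw [show n - 2 + 1 = n - 1 by omega, show m - 2 + 1 = m - 1 by omega] at h
    exact h
  have f1 : ((Nat.choose (n-1) (m-1) : ℚ)) = (m:ℚ) / (n:ℚ) * (Nat.choose n m : ℚ) := by
    have h : (n:ℚ) * (Nat.choose (n-1) (m-1) : ℚ) = (Nat.choose n m : ℚ) * m := by
      exact_mod_cast hnat1
    field_simp
    linarith [h]
  have f2 : ((Nat.choose (n-2) (m-2) : ℚ))
      = ((m:ℚ) - 1) / ((n:ℚ) - 1) * (Nat.choose (n-1) (m-1) : ℚ) := by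
    have hcast : (((n-1 : ℕ) : ℚ)) = (n:ℚ) - 1 := by
      push_cast [Nat.cast_sub (by omega : 1 ≤ n)]; ring
    have hcastm : (((m-1 : ℕ) : ℚ)) = (m:ℚ) - 1 := by
      push_cast [Nat.cast_sub (by omega : 1 ≤ m)]; ring
    have h : ((n:ℚ) - 1) * (Nat.choose (n-2) (m-2) : ℚ)
        = (Nat.choose (n-1) (m-1) : ℚ) * ((m:ℚ) - 1) := by
      calc ((n:ℚ) - 1) * (Nat.choose (n-2) (m-2) : ℚ)
          = (((n-1) * Nat.choose (n-2) (m-2) : ℕ) : ℚ) := by push_cast [hcast]; ring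
        _ = ((Nat.choose (n-1) (m-1) * (m-1) : ℕ) : ℚ) := by rw [hnat2]
        _ = (Nat.choose (n-1) (m-1) : ℚ) * ((m:ℚ) - 1) := by push_cast [hcastm]; ring
    field_simp
    linarith [h]
  set d3 : ℚ := if 3 ≤ m then ((Nat.choose (n-3) (m-3) : ℚ)) else 0 with hd3
  have f3 : d3 = ((m:ℚ) - 2) / ((n:ℚ) - 2) * (Nat.choose (n-2) (m-2) : ℚ) := by
    rw [hd3]
    by_cases h3 : 3 ≤ m
    · simp only [if_pos h3]
      have hnat3 : (n-2) * Nat.choose (n-3) (m-3) = Nat.choose (n-2) (m-2) * (m-2) := by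
        have h := Nat.add_one_mul_choose_eq (n-3) (m-3)
        rw [show n - 3 + 1 = n - 2 by omega, show m - 3 + 1 = m - 2 by omega] at h
        exact h
      have hcast : (((n-2 : ℕ) : ℚ)) = (n:ℚ) - 2 := by
        push_cast [Nat.cast_sub (by omega : 2 ≤ n)]; ring
      have hcastm : (((m-2 : ℕ) : ℚ)) = (m:ℚ) - 2 := by
        push_cast [Nat.cast_sub (by omega : 2 ≤ m)]; ring
      have h : ((n:ℚ) - 2) * (Nat.choose (n-3) (m-3) : ℚ)
          = (Nat.choose (n-2) (m-2) : ℚ) * ((m:ℚ) - 2) := by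
        calc ((n:ℚ) - 2) * (Nat.choose (n-3) (m-3) : ℚ)
            = (((n-2) * Nat.choose (n-3) (m-3) : ℕ) : ℚ) := by push_cast [hcast]; ring
          _ = ((Nat.choose (n-2) (m-2) * (m-2) : ℕ) : ℚ) := by rw [hnat3]
          _ = (Nat.choose (n-2) (m-2) : ℚ) * ((m:ℚ) - 2) := by push_cast [hcastm]; ring
      field_simp
      linarith [h]
    · simp only [if_neg h3]
      have hm2 : m = 2 := by omega
      rw [hm2]
      norm_num
  -- identify the three values of c
  have hc1 : c 1 = ((Nat.choose (n-1) (m-1) : ℚ)) ^ T := by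
    rw [hc]; simp only [if_pos (by omega : 1 ≤ m)]
  have hc2 : c 2 = ((Nat.choose (n-2) (m-2) : ℚ)) ^ T := by
    rw [hc]; simp only [if_pos hm₂]
  have hc3 : c 3 = d3 ^ T := by
    rw [hc, hd3]
    by_cases h3 : 3 ≤ m
    · simp [h3]
    · simp [h3, zero_pow (by omega : T ≠ 0)]
  -- final algebra
  obtain ⟨T', rfl⟩ : ∃ T', T = T' + 1 := ⟨T - 1, by omega⟩
  rw [main, triple_sum hn c, hcard, hc1, hc2, hc3]
  simp only [Nat.add_sub_cancel]
  have t1 : ((n:ℚ) * ((Nat.choose (n-1) (m-1) : ℚ)) ^ (T'+1)) / ((Nat.choose n m : ℚ)) ^ (T'+1)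
      = (m:ℚ) ^ (T'+1) / (n:ℚ) ^ T' := by
    rw [f1]
    simp only [mul_pow, div_pow]
    field_simp
    ring
  have t2 : (3 * ((n:ℚ) * ((n:ℚ) - 1)) * ((Nat.choose (n-2) (m-2) : ℚ)) ^ (T'+1))
        / ((Nat.choose n m : ℚ)) ^ (T'+1)
      = 3 * ((m:ℚ) ^ (T'+1) * ((m:ℚ) - 1) ^ (T'+1)) / ((n:ℚ) ^ T' * ((n:ℚ) - 1) ^ T') := by
    rw [f2, f1]
    simp only [mul_pow, div_pow]
    field_simp
    ring
  have t3 : ((n:ℚ) * ((n:ℚ) - 1) * ((n:ℚ) - 2) * d3 ^ (T'+1))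
        / ((Nat.choose n m : ℚ)) ^ (T'+1)
      = ((m:ℚ) ^ (T'+1) * ((m:ℚ) - 1) ^ (T'+1) * ((m:ℚ) - 2) ^ (T'+1))
        / ((n:ℚ) ^ T' * ((n:ℚ) - 1) ^ T' * ((n:ℚ) - 2) ^ T') := by
    rw [f3, f2, f1]
    simp only [mul_pow, div_pow]
    field_simp
    ring
  rw [add_div, add_div, t1, t2, t3]
  field_simp
  ring
end
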